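/- For 1 ≤ d ≤ (n-3)/2, the sequence A(n,d,1), A(n,d,2), ..., A(n,d,n) is strictly decreasing: A(n,d,n) < A(n,d,n-1) < ... < A(n,d,1). -/

import Mathlib

open Finset

/-- Number of descents of a permutation of `Fin n` (positions `i` with `π(i) > π(i+1)`). -/
def descents (n : ℕ) (π : Equiv.Perm (Fin n)) : ℕ :=
  (Finset.univ.filter (fun i : Fin n =>
    ∃ j : Fin n, (j : ℕ) = (i : ℕ) + 1 ∧ π j < π i)).card

/-- `A n d k` : number of permutations of `{1,…,n}` with exactly `d` descents and first value `k`
(1-based values; `d : ℤ`, so `A n d k = 0` when `d < 0`). -/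
def A (n : ℕ) (d : ℤ) (k : ℕ) : ℕ :=
  (Finset.univ.filter (fun π : Equiv.Perm (Fin n) =>
    (descents n π : ℤ) = d ∧ ∃ i : Fin n, (i : ℕ) = 0 ∧ (π i : ℕ) + 1 = k)).card

/-- `Alast n d k` : number with `d` descents and last value `k`. -/
def Alast (n : ℕ) (d : ℤ) (k : ℕ) : ℕ :=
  (Finset.univ.filter (fun π : Equiv.Perm (Fin n) =>
    (descents n π : ℤ) = d ∧ ∃ i : Fin n, (i : ℕ) + 1 = n ∧ (π i : ℕ) + 1 = k)).card

/-- Eulerian number: permutations of `{1,…,n}` with `d` descents. -/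
def Eul (n : ℕ) (d : ℤ) : ℕ :=
  (Finset.univ.filter (fun π : Equiv.Perm (Fin n) => (descents n π : ℤ) = d)).card

namespace Aux14

open Equiv

lemma descents_eq_sum (n : ℕ) (π : Equiv.Perm (Fin n)) :
    descents n π = ∑ i : Fin n, if (∃ j : Fin n, (j : ℕ) = (i : ℕ) + 1 ∧ π j < π i) then 1 else 0 :=
  Finset.card_filter _ _

def Φ {n : ℕ} (c : Fin (n + 1)) (σ : Equiv.Perm (Fin n)) : Equiv.Perm (Fin (n + 1)) :=
  (finSuccEquiv n).trans ((Equiv.optionCongr σ).trans (finSuccEquiv' c).symm)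

@[simp] lemma Φ_zero {n : ℕ} (c : Fin (n + 1)) (σ : Equiv.Perm (Fin n)) : Φ c σ 0 = c := by
  simp [Φ]

@[simp] lemma Φ_succ {n : ℕ} (c : Fin (n + 1)) (σ : Equiv.Perm (Fin n)) (i : Fin n) :
    Φ c σ i.succ = c.succAbove (σ i) := by
  simp [Φ]

lemma descents_Φ {m : ℕ} (c : Fin (m + 2)) (σ : Equiv.Perm (Fin (m + 1))) :
    descents (m + 2) (Φ c σ) = descents (m + 1) σ + (if ((σ 0 : ℕ) < (c : ℕ)) then 1 else 0) := by
  rw [descents_eq_sum, descents_eq_sum, Fin.sum_univ_succ, add_comm]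
  congr 1
  · apply Finset.sum_congr rfl
    intro i _
    congr 1
    apply propext
    constructor
    · rintro ⟨J, hJ, hlt⟩
      have hJlt : (i : ℕ) + 1 < m + 1 := by have := J.isLt; simp at hJ; omega
      refine ⟨⟨(i : ℕ) + 1, hJlt⟩, rfl, ?_⟩
      have hJeq : J = (⟨(i : ℕ) + 1, hJlt⟩ : Fin (m + 1)).succ := by
        apply Fin.ext; simp [hJ]
      rw [hJeq, Φ_succ, Φ_succ] at hlt
      exact Fin.succAbove_lt_succAbove_iff.mp hlt
    · rintro ⟨j, hj, hlt⟩
      refine ⟨j.succ, by simp [hj], ?_⟩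
      rw [Φ_succ, Φ_succ]
      exact Fin.succAbove_lt_succAbove_iff.mpr hlt
  · congr 1
    apply propext
    constructor
    · rintro ⟨J, hJ, hlt⟩
      have hJeq : J = (0 : Fin (m + 1)).succ := by apply Fin.ext; simpa using hJ
      rw [hJeq, Φ_succ, Φ_zero] at hlt
      have := (Fin.succAbove_lt_iff_castSucc_lt c (σ 0)).mp hlt
      simpa [Fin.lt_def] using this
    · intro h
      refine ⟨(0 : Fin (m + 1)).succ, by simp, ?_⟩
      rw [Φ_succ, Φ_zero]
      exact (Fin.succAbove_lt_iff_castSucc_lt c (σ 0)).mpr (by simpa [Fin.lt_def] using h)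


lemma A_eq_card {n : ℕ} (d : ℤ) (c : Fin (n + 1)) :
    A (n + 1) d ((c : ℕ) + 1) =
      (Finset.univ.filter (fun π : Equiv.Perm (Fin (n + 1)) =>
        (descents (n + 1) π : ℤ) = d ∧ π 0 = c)).card := by
  rw [A]
  congr 1
  apply Finset.filter_congr
  intro π _
  constructor
  · rintro ⟨hd, i, hi, hv⟩
    refine ⟨hd, ?_⟩
    have : i = 0 := Fin.ext hi
    subst this
    exact Fin.ext (by omega)
  · rintro ⟨hd, h0⟩
    exact ⟨hd, 0, rfl, by rw [h0]⟩

lemma card_bij_step {m : ℕ} (d : ℤ) (c : Fin (m + 2)) :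
    (Finset.univ.filter (fun σ : Equiv.Perm (Fin (m + 1)) =>
        (descents (m + 1) σ : ℤ) + (if ((σ 0 : ℕ) < (c : ℕ)) then 1 else 0) = d)).card =
    (Finset.univ.filter (fun π : Equiv.Perm (Fin (m + 2)) =>
        (descents (m + 2) π : ℤ) = d ∧ π 0 = c)).card := by
  apply Finset.card_bij (fun σ _ => Φ c σ)
  · intro σ hσ
    simp only [Finset.mem_filter, Finset.mem_univ, true_and] at hσ ⊢
    refine ⟨?_, Φ_zero c σ⟩
    rw [descents_Φ]
    push_cast [apply_ite (fun x : ℕ => (x : ℤ))]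
    simpa using hσ
  · intro σ1 h1 σ2 h2 heq
    apply Equiv.ext
    intro i
    have := congrArg (fun π : Equiv.Perm (Fin (m + 2)) => π i.succ) heq
    simp only [Φ_succ] at this
    exact Fin.succAbove_right_injective this
  · intro π hπ
    simp only [Finset.mem_filter, Finset.mem_univ, true_and] at hπ
    obtain ⟨hd, h0⟩ := hπ
    set τ : Option (Fin (m + 1)) ≃ Option (Fin (m + 1)) :=
      (finSuccEquiv (m + 1)).symm.trans (π.trans (finSuccEquiv' c)) with hτ
    have hτnone : τ none = none := by
      simp [hτ, finSuccEquiv_symm_none, h0, finSuccEquiv'_at]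
    set σ := Equiv.removeNone τ with hσdef
    have hsome : ∀ i, τ (some i) = some (σ i) := by
      intro i
      have h1 : π i.succ ≠ c := by
        rw [← h0]
        intro h
        have := π.injective h
        exact (Fin.succ_ne_zero i) this
      obtain ⟨y, hy⟩ := Fin.exists_succAbove_eq h1
      have h2 : τ (some i) = some y := by
        simp [hτ, finSuccEquiv_symm_some, ← hy, finSuccEquiv'_succAbove]
      have h5 := Equiv.removeNone_some τ ⟨y, h2⟩
      rw [h2, hσdef]
      exact (h5.trans h2).symm
    have hΦ : Φ c σ = π := by
      apply Equiv.ext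
      intro x
      induction x using Fin.cases with
      | zero => rw [Φ_zero, h0]
      | succ i =>
          rw [Φ_succ]
          have h3 : finSuccEquiv' c (π i.succ) = some (σ i) := by
            have := hsome i
            simpa [hτ, finSuccEquiv_symm_some] using this
          have h4 := congrArg (finSuccEquiv' c).symm h3
          simp only [Equiv.symm_apply_apply, finSuccEquiv'_symm_some] at h4
          exact h4.symm
    refine ⟨σ, ?_, hΦ⟩
    simp only [Finset.mem_filter, Finset.mem_univ, true_and]
    have := descents_Φ c σ
    rw [hΦ] at this
    rw [← hd, this]
    push_cast [apply_ite (fun x : ℕ => (x : ℤ))]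
    ring


lemma card_fiber {m : ℕ} (d : ℤ) (c : Fin (m + 2)) :
    (Finset.univ.filter (fun σ : Equiv.Perm (Fin (m + 1)) =>
        (descents (m + 1) σ : ℤ) + (if ((σ 0 : ℕ) < (c : ℕ)) then 1 else 0) = d)).card
    = ∑ c' : Fin (m + 1), A (m + 1) (if ((c' : ℕ) < (c : ℕ)) then d - 1 else d) ((c' : ℕ) + 1) := by
  rw [Finset.card_eq_sum_card_fiberwise (f := fun σ : Equiv.Perm (Fin (m + 1)) => σ 0)
    (t := Finset.univ) (fun x _ => Finset.mem_univ _)]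
  apply Finset.sum_congr rfl
  intro c' _
  rw [A_eq_card, Finset.filter_filter]
  congr 1
  apply Finset.filter_congr
  intro σ _
  constructor
  · rintro ⟨h1, h2⟩
    refine ⟨?_, h2⟩
    rw [h2] at h1
    split_ifs at h1 ⊢ <;> omega
  · rintro ⟨h1, h2⟩
    refine ⟨?_, h2⟩
    rw [h2]
    split_ifs at h1 ⊢ <;> omega

lemma R1 {m : ℕ} (d : ℤ) (c : ℕ) (hc : c < m + 2) :
    A (m + 2) d (c + 1) = ∑ j ∈ Finset.range (m + 1),
      (if j < c then A (m + 1) (d - 1) (j + 1) else A (m + 1) d (j + 1)) := by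
  have h := (A_eq_card d (⟨c, hc⟩ : Fin (m + 2))).trans
    ((card_bij_step d ⟨c, hc⟩).symm.trans (card_fiber d ⟨c, hc⟩))
  simp only [Fin.val_mk] at h
  rw [h]
  rw [Fin.sum_univ_eq_sum_range (fun j => A (m + 1) (if j < c then d - 1 else d) (j + 1)) (m + 1)]
  apply Finset.sum_congr rfl
  intro j _
  split_ifs <;> rfl


lemma descents_add_rev {n : ℕ} (π : Equiv.Perm (Fin n)) :
    descents n (Fin.revPerm * π) + descents n π = n - 1 := by
  cases n with
  | zero => simp [descents]
  | succ m =>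
    rw [descents_eq_sum, descents_eq_sum, ← Finset.sum_add_distrib]
    rw [Fin.sum_univ_castSucc]
    have hlast : ∀ (ρ : Equiv.Perm (Fin (m+1))),
        ¬ (∃ j : Fin (m+1), (j : ℕ) = ((Fin.last m : Fin (m+1)) : ℕ) + 1 ∧ ρ j < ρ (Fin.last m)) := by
      rintro ρ ⟨j, hj, -⟩
      have := j.isLt
      simp [Fin.val_last] at hj
      omega
    rw [if_neg (hlast _), if_neg (hlast _)]
    have hterm : ∀ i : Fin m,
        ((if (∃ j : Fin (m+1), (j : ℕ) = ((i.castSucc : Fin (m+1)) : ℕ) + 1 ∧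
            (Fin.revPerm * π : Equiv.Perm (Fin (m+1))) j < (Fin.revPerm * π : Equiv.Perm (Fin (m+1))) i.castSucc) then 1 else 0) +
         (if (∃ j : Fin (m+1), (j : ℕ) = ((i.castSucc : Fin (m+1)) : ℕ) + 1 ∧
            π j < π i.castSucc) then 1 else 0)) = 1 := by
      intro i
      have hJ : ∀ (j : Fin (m+1)), (j : ℕ) = ((i.castSucc : Fin (m+1)) : ℕ) + 1 → j = i.succ := by
        intro j hj
        apply Fin.ext
        simpa using hj
      have hne : π i.succ ≠ π i.castSucc := by
        intro h
        have := π.injective h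
        have h2 := congrArg Fin.val this
        simp at h2
      have h1 : (∃ j : Fin (m+1), (j : ℕ) = ((i.castSucc : Fin (m+1)) : ℕ) + 1 ∧
          (Fin.revPerm * π : Equiv.Perm (Fin (m+1))) j < (Fin.revPerm * π : Equiv.Perm (Fin (m+1))) i.castSucc) ↔ π i.castSucc < π i.succ := by
        constructor
        · rintro ⟨j, hj, hlt⟩
          rw [hJ j hj] at hlt
          simpa [Equiv.Perm.mul_apply, Fin.rev_lt_rev] using hlt
        · intro h
          exact ⟨i.succ, by simp, by simpa [Equiv.Perm.mul_apply, Fin.rev_lt_rev] using h⟩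
      have h2 : (∃ j : Fin (m+1), (j : ℕ) = ((i.castSucc : Fin (m+1)) : ℕ) + 1 ∧
          π j < π i.castSucc) ↔ π i.succ < π i.castSucc := by
        constructor
        · rintro ⟨j, hj, hlt⟩
          rwa [hJ j hj] at hlt
        · intro h
          exact ⟨i.succ, by simp, h⟩
      rw [if_congr h1 rfl rfl, if_congr h2 rfl rfl]
      rcases lt_or_gt_of_ne hne with h | h
      · rw [if_neg (by exact fun hh => absurd hh (not_lt.mpr h.le)), if_pos h]
      · rw [if_pos h, if_neg (by exact fun hh => absurd hh (not_lt.mpr h.le))]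
    rw [Finset.sum_congr rfl (fun i _ => hterm i)]
    simp

lemma descents_le {n : ℕ} (π : Equiv.Perm (Fin n)) : descents n π ≤ n - 1 := by
  have := descents_add_rev π
  omega

lemma R2 {n : ℕ} (d : ℤ) (k : ℕ) (hk1 : 1 ≤ k) (hkn : k ≤ n) :
    A n d k = A n ((n : ℤ) - 1 - d) (n + 1 - k) := by
  rw [A, A]
  apply Finset.card_bij (fun π _ => Fin.revPerm * π)
  · intro π hπ
    simp only [Finset.mem_filter, Finset.mem_univ, true_and] at hπ ⊢
    obtain ⟨hd, i, hi, hv⟩ := hπ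
    have hrev := descents_add_rev π
    have hle := descents_le π
    constructor
    · have h1 : (1:ℕ) ≤ n := hk1.trans hkn
      omega
    · refine ⟨i, hi, ?_⟩
      have hval : (((Fin.revPerm * π : Equiv.Perm (Fin n))) i : ℕ) = n - 1 - (π i : ℕ) := by
        rw [Equiv.Perm.mul_apply]
        simp [Fin.val_rev]
        omega
      have := (π i).isLt
      omega
  · intro a ha b hb hab
    exact mul_left_cancel hab
  · intro π' hπ'
    simp only [Finset.mem_filter, Finset.mem_univ, true_and] at hπ'
    obtain ⟨hd, i, hi, hv⟩ := hπ'
    refine ⟨Fin.revPerm * π', ?_, ?_⟩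
    · simp only [Finset.mem_filter, Finset.mem_univ, true_and]
      have hrev := descents_add_rev π'
      have hle := descents_le π'
      constructor
      · omega
      · refine ⟨i, hi, ?_⟩
        have hval : (((Fin.revPerm * π' : Equiv.Perm (Fin n))) i : ℕ) = n - 1 - (π' i : ℕ) := by
          rw [Equiv.Perm.mul_apply]
          simp [Fin.val_rev]
          omega
        have := (π' i).isLt
        omega
    · apply Equiv.ext
      intro x
      simp [Equiv.Perm.mul_apply]

lemma A_one (d : ℤ) (k : ℕ) : A 1 d k = if d = 0 ∧ k = 1 then 1 else 0 := by
  have hdesc : ∀ π : Equiv.Perm (Fin 1), descents 1 π = 0 := by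
    intro π
    rw [descents, Finset.card_eq_zero, Finset.filter_eq_empty_iff]
    rintro i -
    rintro ⟨j, hj, -⟩
    have := j.isLt
    have := i.isLt
    omega
  rw [A]
  by_cases h : d = 0 ∧ k = 1
  · rw [if_pos h]
    have : (Finset.univ.filter (fun π : Equiv.Perm (Fin 1) =>
        (descents 1 π : ℤ) = d ∧ ∃ i : Fin 1, (i : ℕ) = 0 ∧ (π i : ℕ) + 1 = k)) = Finset.univ := by
      apply Finset.filter_true_of_mem
      intro π _
      refine ⟨by rw [hdesc]; omega, 0, rfl, ?_⟩
      have : (π 0 : ℕ) = 0 := by omega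
      omega
    rw [this]
    simp [Fintype.card_perm]
  · rw [if_neg h]
    rw [Finset.card_eq_zero, Finset.filter_eq_empty_iff]
    rintro π -
    rintro ⟨hd, i, hi, hv⟩
    rw [hdesc] at hd
    have : (π i : ℕ) = 0 := by have := (π i).isLt; omega
    apply h
    constructor
    · omega
    · omega

lemma A_neg {n : ℕ} {d : ℤ} (hd : d < 0) (k : ℕ) : A n d k = 0 := by
  rw [A, Finset.card_eq_zero, Finset.filter_eq_empty_iff]
  rintro π - ⟨hdd, -⟩
  have : (0:ℤ) ≤ (descents n π : ℤ) := Int.natCast_nonneg _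
  omega


def B (n : ℕ) (d : ℤ) (j : ℕ) : ℤ := (A n d (j + 1) : ℤ)

def Dl (n : ℕ) (d : ℤ) (j : ℕ) : ℤ := B n d j - B n (d - 1) j

lemma B_nonneg (n : ℕ) (d : ℤ) (j : ℕ) : 0 ≤ B n d j := Int.natCast_nonneg _

lemma B_neg {n : ℕ} {d : ℤ} (hd : d < 0) (j : ℕ) : B n d j = 0 := by
  rw [B, A_neg hd]; rfl

lemma B_one (d : ℤ) : B 1 d 0 = if d = 0 then 1 else 0 := by
  rw [B, A_one]
  split_ifs with h1 h2 h2 <;> simp_all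

lemma recB (m : ℕ) (d : ℤ) (c : ℕ) (hc : c < m + 2) :
    B (m + 2) d c = ∑ j ∈ Finset.range (m + 1),
      (if j < c then B (m + 1) (d - 1) j else B (m + 1) d j) := by
  rw [B, R1 d c hc]
  push_cast [apply_ite (fun x : ℕ => (x : ℤ))]
  rfl

lemma recD (m : ℕ) (d : ℤ) (c : ℕ) (hc : c < m + 2) :
    Dl (m + 2) d c = ∑ j ∈ Finset.range (m + 1),
      (if j < c then Dl (m + 1) (d - 1) j else Dl (m + 1) d j) := by
  rw [Dl, recB m d c hc, recB m (d - 1) c hc, ← Finset.sum_sub_distrib]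
  apply Finset.sum_congr rfl
  intro j _
  split_ifs <;> rfl

lemma symB (n : ℕ) (d : ℤ) (j : ℕ) (hj : j < n) :
    B n d j = B n ((n : ℤ) - 1 - d) (n - 1 - j) := by
  rw [B, B, R2 d (j + 1) (by omega) (by omega)]
  have e : n + 1 - (j + 1) = n - 1 - j + 1 := by omega
  rw [e]

lemma reflD (n : ℕ) (d : ℤ) (j : ℕ) (hj : j < n) :
    Dl n d j = -Dl n ((n : ℤ) - d) (n - 1 - j) := by
  rw [Dl, Dl, symB n d j hj, symB n (d - 1) j hj]
  have e1 : (n : ℤ) - 1 - (d - 1) = (n : ℤ) - d := by ring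
  have e2 : (n : ℤ) - 1 - d = (n : ℤ) - d - 1 := by ring
  rw [e1, e2]
  ring

lemma sum_ite_split (p q : ℕ → ℤ) (c m : ℕ) (hc : c ≤ m) :
    ∑ j ∈ Finset.range m, (if j < c then p j else q j)
      = (∑ j ∈ Finset.range c, p j) + ∑ j ∈ Finset.Ico c m, q j := by
  rw [Finset.range_eq_Ico, ← Finset.sum_Ico_consecutive _ (Nat.zero_le c) hc,
    ← Finset.range_eq_Ico]
  congr 1
  · apply Finset.sum_congr rfl
    intro j hj
    rw [if_pos (Finset.mem_range.mp hj)]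
  · apply Finset.sum_congr rfl
    intro j hj
    rw [if_neg (by have := (Finset.mem_Ico.mp hj).1; omega)]

lemma antisymD (t : ℕ) (j : ℕ) (hj : j < 2 * t) :
    Dl (2 * t) (t : ℤ) j = -Dl (2 * t) (t : ℤ) (2 * t - 1 - j) := by
  have h := reflD (2 * t) (t : ℤ) j hj
  have e : ((2 * t : ℕ) : ℤ) - (t : ℤ) = (t : ℤ) := by push_cast; ring
  rwa [e] at h

lemma sumD_zero (t : ℕ) : ∑ j ∈ Finset.range (2 * t), Dl (2 * t) (t : ℤ) j = 0 := by
  have h := Finset.sum_range_reflect (fun j => Dl (2 * t) (t : ℤ) j) (2 * t)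
  have h2 : ∑ j ∈ Finset.range (2 * t), Dl (2 * t) (t : ℤ) (2 * t - 1 - j)
      = ∑ j ∈ Finset.range (2 * t), -Dl (2 * t) (t : ℤ) j := by
    apply Finset.sum_congr rfl
    intro j hj
    have := antisymD t j (Finset.mem_range.mp hj)
    linarith
  rw [h2, Finset.sum_neg_distrib] at h
  linarith

lemma PS_reflect (t r : ℕ) (hr : r ≤ 2 * t) :
    ∑ j ∈ Finset.range r, Dl (2 * t) (t : ℤ) j
      = ∑ j ∈ Finset.range (2 * t - r), Dl (2 * t) (t : ℤ) j := by
  have htot := sumD_zero t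
  rw [Finset.range_eq_Ico, ← Finset.sum_Ico_consecutive _ (Nat.zero_le r) hr,
    ← Finset.range_eq_Ico] at htot
  have hIco : ∑ j ∈ Finset.Ico r (2 * t), Dl (2 * t) (t : ℤ) j
      = -∑ j ∈ Finset.range (2 * t - r), Dl (2 * t) (t : ℤ) j := by
    rw [Finset.sum_Ico_eq_sum_range]
    have : ∀ l ∈ Finset.range (2 * t - r), Dl (2 * t) (t : ℤ) (r + l)
        = -Dl (2 * t) (t : ℤ) (2 * t - r - 1 - l) := by
      intro l hl
      have hl' := Finset.mem_range.mp hl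
      have e : 2 * t - 1 - (r + l) = 2 * t - r - 1 - l := by omega
      rw [antisymD t (r + l) (by omega), e]
    rw [Finset.sum_congr rfl this, Finset.sum_neg_distrib]
    congr 1
    exact Finset.sum_range_reflect (fun j => Dl (2 * t) (t : ℤ) j) (2 * t - r)
  rw [hIco] at htot
  linarith

lemma B_zero_pos : ∀ n : ℕ, 0 < B (n + 1) 0 0 := by
  intro n
  induction n with
  | zero => rw [B_one]; norm_num
  | succ k ih =>
    rw [recB k 0 0 (by omega)]
    have hnn : ∀ j ∈ Finset.range (k + 1), 0 ≤ (if j < 0 then B (k + 1) (0 - 1) j else B (k + 1) 0 j) := by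
      intro j _
      rw [if_neg (by omega)]
      exact B_nonneg _ _ _
    have h0 : (0 : ℕ) ∈ Finset.range (k + 1) := Finset.mem_range.mpr (by omega)
    calc (0 : ℤ) < B (k + 1) 0 0 := ih
    _ = (if (0:ℕ) < 0 then B (k + 1) (0 - 1) 0 else B (k + 1) 0 0) := by rw [if_neg (by omega)]
    _ ≤ _ := Finset.single_le_sum hnn h0


def Pst (m : ℕ) : Prop := ∀ (d j : ℕ), 1 ≤ d → 2 * d ≤ m - 2 → j < m → 0 < Dl m (d : ℤ) j
def MstAt (m : ℕ) : Prop := ∀ t : ℕ, m = 2 * t + 1 → ∀ j < m,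
    0 ≤ Dl m (t : ℤ) j ∧ (1 ≤ j → 0 < Dl m (t : ℤ) j)
def NstAt (m : ℕ) : Prop := ∀ t : ℕ, m = 2 * t → 1 ≤ t → ∀ r ≤ m,
    (∑ j ∈ Finset.range r, Dl m (t : ℤ) j) ≤ 0

lemma Dl_zero_nonneg (n : ℕ) (j : ℕ) : 0 ≤ Dl n 0 j := by
  rw [Dl, B_neg (by omega : (0:ℤ) - 1 < 0)]
  have := B_nonneg n 0 j
  linarith

lemma Dl_two_zero_zero : 0 < Dl 2 0 0 := by
  rw [Dl, B_neg (by omega : (0:ℤ) - 1 < 0), recB 0 0 0 (by omega)]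
  rw [Finset.sum_range_one, if_neg (by omega : ¬ (0:ℕ) < 0)]
  have := B_zero_pos 0
  linarith

theorem good : ∀ m : ℕ, Pst m ∧ MstAt m ∧ NstAt m := by
  intro m
  induction m using Nat.strong_induction_on with
  | _ m IH =>
  refine ⟨?_, ?_, ?_⟩
  · -- Pst m
    intro d j hd1 hd2 hjm
    have hm4 : 4 ≤ m := by omega
    obtain ⟨m', rfl⟩ : ∃ m', m = m' + 2 := ⟨m - 2, by omega⟩
    have hm'2 : 2 ≤ m' := by omega
    have hdm : 2 * d ≤ m' := by omega
    have ha_nn : ∀ i, i < m' + 1 → 0 ≤ Dl (m' + 1) ((d : ℤ) - 1) i := by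
      intro i hi
      rcases Nat.lt_or_ge d 2 with hd | hd
      · have e : (d : ℤ) - 1 = 0 := by omega
        rw [e]
        exact Dl_zero_nonneg _ _
      · have h := (IH (m' + 1) (by omega)).1 (d - 1) i (by omega) (by omega) hi
        have e : ((d - 1 : ℕ) : ℤ) = (d : ℤ) - 1 := by omega
        rw [e] at h
        linarith
    have ha_0 : 0 < Dl (m' + 1) ((d : ℤ) - 1) 0 := by
      rcases Nat.lt_or_ge d 2 with hd | hd
      · have e : (d : ℤ) - 1 = 0 := by omega
        rw [e, Dl, B_neg (by omega : (0:ℤ) - 1 < 0)]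
        have := B_zero_pos m'
        linarith
      · have h := (IH (m' + 1) (by omega)).1 (d - 1) 0 (by omega) (by omega) (by omega)
        have e : ((d - 1 : ℕ) : ℤ) = (d : ℤ) - 1 := by omega
        rwa [e] at h
    have hcase : 2 * d ≤ m' - 1 ∨ m' = 2 * d := by omega
    have hb_nn : ∀ i, i < m' + 1 → 0 ≤ Dl (m' + 1) (d : ℤ) i := by
      intro i hi
      rcases hcase with hc | hc
      · have h := (IH (m' + 1) (by omega)).1 d i hd1 (by omega) hi
        linarith
      · exact ((IH (m' + 1) (by omega)).2.1 d (by omega) i hi).1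
    have hb_str : ∀ i, 1 ≤ i → i < m' + 1 → 0 < Dl (m' + 1) (d : ℤ) i := by
      intro i hi1 hi
      rcases hcase with hc | hc
      · exact (IH (m' + 1) (by omega)).1 d i hd1 (by omega) hi
      · exact ((IH (m' + 1) (by omega)).2.1 d (by omega) i hi).2 hi1
    rw [recD m' (d : ℤ) j (by omega)]
    have hnn : ∀ i ∈ Finset.range (m' + 1),
        0 ≤ (if i < j then Dl (m' + 1) ((d:ℤ) - 1) i else Dl (m' + 1) (d:ℤ) i) := by
      intro i hi
      have hi' := Finset.mem_range.mp hi
      split_ifs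
      · exact ha_nn i hi'
      · exact hb_nn i hi'
    apply Finset.sum_pos' hnn
    rcases Nat.eq_or_lt_of_le (by omega : j ≤ m' + 1) with hje | hjlt
    · -- j = m'+1 : use i₀ = 0, then-branch
      refine ⟨0, Finset.mem_range.mpr (by omega), ?_⟩
      rw [if_pos (by omega)]
      exact ha_0
    · rcases Nat.eq_zero_or_pos j with hj0 | hj1
      · -- j = 0 : use i₀ = 1, else-branch
        refine ⟨1, Finset.mem_range.mpr (by omega), ?_⟩
        rw [if_neg (by omega)]
        exact hb_str 1 le_rfl (by omega)
      · -- 1 ≤ j ≤ m' : use i₀ = j, else-branch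
        refine ⟨j, Finset.mem_range.mpr (by omega), ?_⟩
        rw [if_neg (by omega)]
        exact hb_str j hj1 hjlt
  · -- MstAt m
    intro t ht j hj
    rcases Nat.eq_zero_or_pos t with ht0 | ht1
    · subst ht0
      simp only [Nat.mul_zero, Nat.zero_add] at ht
      subst ht
      have hj0 : j = 0 := by omega
      subst hj0
      have : Dl 1 ((0:ℕ) : ℤ) 0 = 1 := by
        rw [Nat.cast_zero, Dl, B_neg (by omega : (0:ℤ) - 1 < 0), B_one]
        norm_num
      rw [this]
      exact ⟨by norm_num, by omega⟩
    · obtain ⟨m', hm2, h21⟩ : ∃ m', m = m' + 2 ∧ m' + 1 = 2 * t := ⟨2 * t - 1, by omega, by omega⟩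
      subst hm2
      have hj' : j ≤ m' + 1 := by omega
      have hrec := recD m' (t : ℤ) j (by omega)
      rw [sum_ite_split _ _ j (m' + 1) hj'] at hrec
      -- second piece nonneg
      have hIco : 0 ≤ ∑ i ∈ Finset.Ico j (m' + 1), Dl (m' + 1) (t : ℤ) i := by
        have hPS := (IH (m' + 1) (by omega)).2.2 t (by omega) ht1 j (by omega)
        have htot := sumD_zero t
        rw [← h21] at htot
        have hsplit := Finset.sum_Ico_consecutive (fun i => Dl (m' + 1) (t : ℤ) i)
          (Nat.zero_le j) hj'
        rw [← Finset.range_eq_Ico] at hsplit  -- maybe shape mismatch; fix below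
        have : (∑ i ∈ Finset.range j, Dl (m' + 1) (t : ℤ) i)
            + ∑ i ∈ Finset.Ico j (m' + 1), Dl (m' + 1) (t : ℤ) i
            = ∑ i ∈ Finset.range (m' + 1), Dl (m' + 1) (t : ℤ) i := by
          rw [Finset.range_eq_Ico, Finset.range_eq_Ico,
            Finset.sum_Ico_consecutive _ (Nat.zero_le j) hj']
        rw [htot] at this
        linarith
      -- first piece terms
      have hfirst_nn : ∀ i, i < m' + 1 → 0 ≤ Dl (m' + 1) ((t : ℤ) - 1) i := by
        intro i hi
        rcases Nat.lt_or_ge t 2 with ht2 | ht2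
        · have e : (t : ℤ) - 1 = 0 := by omega
          rw [e]
          exact Dl_zero_nonneg _ _
        · have h := (IH (m' + 1) (by omega)).1 (t - 1) i (by omega) (by omega) hi
          have e : ((t - 1 : ℕ) : ℤ) = (t : ℤ) - 1 := by omega
          rw [e] at h
          linarith
      have hfirst_0 : 0 < Dl (m' + 1) ((t : ℤ) - 1) 0 := by
        rcases Nat.lt_or_ge t 2 with ht2 | ht2
        · have ht1' : t = 1 := by omega
          subst ht1'
          have e : ((1:ℕ) : ℤ) - 1 = 0 := by norm_num
          rw [e]
          have hm0 : m' + 1 = 2 := by omega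
          have hm'0 : m' = 1 := by omega
          subst hm'0
          exact Dl_two_zero_zero
        · have h := (IH (m' + 1) (by omega)).1 (t - 1) 0 (by omega) (by omega) (by omega)
          have e : ((t - 1 : ℕ) : ℤ) = (t : ℤ) - 1 := by omega
          rwa [e] at h
      constructor
      · rw [hrec]
        have h1 : 0 ≤ ∑ i ∈ Finset.range j, Dl (m' + 1) ((t : ℤ) - 1) i :=
          Finset.sum_nonneg (fun i hi => hfirst_nn i (by have := Finset.mem_range.mp hi; omega))
        linarith
      · intro hj1
        rw [hrec]
        have h1 : 0 < ∑ i ∈ Finset.range j, Dl (m' + 1) ((t : ℤ) - 1) i := by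
          apply Finset.sum_pos'
            (fun i hi => hfirst_nn i (by have := Finset.mem_range.mp hi; omega))
          exact ⟨0, Finset.mem_range.mpr (by omega), hfirst_0⟩
        linarith
  · -- NstAt m
    intro t ht ht1 r hr
    subst ht
    have hN' : ∀ j, j < t → Dl (2 * t) (t : ℤ) j ≤ 0 := by
      intro j hjt
      obtain ⟨m', hm2, h21⟩ : ∃ m', 2 * t = m' + 2 ∧ m' + 1 = 2 * t - 1 :=
        ⟨2 * t - 2, by omega, by omega⟩
      rw [hm2, recD m' (t : ℤ) j (by omega), sum_ite_split _ _ j (m' + 1) (by omega)]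
      have hMst := (IH (m' + 1) (by omega)).2.1 (t - 1) (by omega)
      have ecast : ((t - 1 : ℕ) : ℤ) = (t : ℤ) - 1 := by omega
      have hg_nn : ∀ i, i < m' + 1 → 0 ≤ Dl (m' + 1) ((t : ℤ) - 1) i := by
        intro i hi
        have := (hMst i hi).1
        rwa [ecast] at this
      -- second sum rewriting
      have hsec : ∑ i ∈ Finset.Ico j (m' + 1), Dl (m' + 1) (t : ℤ) i
          = -∑ l ∈ Finset.range (m' + 1 - j), Dl (m' + 1) ((t : ℤ) - 1) l := by
        have hpt : ∀ i, i < m' + 1 → Dl (m' + 1) (t : ℤ) i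
            = -Dl (m' + 1) ((t : ℤ) - 1) (m' - i) := by
          intro i hi
          have h := reflD (m' + 1) (t : ℤ) i hi
          have e1 : ((m' + 1 : ℕ) : ℤ) - (t : ℤ) = (t : ℤ) - 1 := by omega
          have e2 : m' + 1 - 1 - i = m' - i := by omega
          rwa [e1, e2] at h
        rw [Finset.sum_congr rfl (fun i hi => hpt i (by have := (Finset.mem_Ico.mp hi).2; omega))]
        rw [Finset.sum_neg_distrib]
        congr 1
        rw [Finset.sum_Ico_eq_sum_range]
        have : ∀ l ∈ Finset.range (m' + 1 - j), Dl (m' + 1) ((t : ℤ) - 1) (m' - (j + l))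
            = Dl (m' + 1) ((t : ℤ) - 1) ((m' + 1 - j) - 1 - l) := by
          intro l hl
          congr 1
          omega
        rw [Finset.sum_congr rfl this]
        exact Finset.sum_range_reflect (fun l => Dl (m' + 1) ((t : ℤ) - 1) l) (m' + 1 - j)
      rw [hsec]
      -- Σ_{i<j} g - Σ_{i<N} g ≤ 0 since j ≤ N
      have hjN : j ≤ m' + 1 - j := by omega
      have hsplit : ∑ l ∈ Finset.range (m' + 1 - j), Dl (m' + 1) ((t : ℤ) - 1) l
          = (∑ l ∈ Finset.range j, Dl (m' + 1) ((t : ℤ) - 1) l)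
            + ∑ l ∈ Finset.Ico j (m' + 1 - j), Dl (m' + 1) ((t : ℤ) - 1) l := by
        rw [Finset.range_eq_Ico, ← Finset.sum_Ico_consecutive _ (Nat.zero_le j) hjN,
          ← Finset.range_eq_Ico]
      have hIconn : 0 ≤ ∑ l ∈ Finset.Ico j (m' + 1 - j), Dl (m' + 1) ((t : ℤ) - 1) l :=
        Finset.sum_nonneg (fun l hl => hg_nn l (by have := (Finset.mem_Ico.mp hl).2; omega))
      rw [hsplit]
      linarith
    rcases le_or_gt r t with hrt | hrt
    · apply Finset.sum_nonpos
      intro j hj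
      exact hN' j (by have := Finset.mem_range.mp hj; omega)
    · rw [PS_reflect t r hr]
      apply Finset.sum_nonpos
      intro j hj
      exact hN' j (by have := Finset.mem_range.mp hj; omega)


end Aux14

theorem stmt14 (n : ℕ) (hn : 5 ≤ n) (d : ℕ) (hd1 : 1 ≤ d) (hd2 : 2 * d ≤ n - 3) :
    ∀ k : ℕ, 1 ≤ k → k ≤ n - 1 → A n (d : ℤ) (k + 1) < A n (d : ℤ) k := by
  intro k hk1 hk2
  obtain ⟨m', rfl⟩ : ∃ m', n = m' + 2 := ⟨n - 2, by omega⟩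
  have hkm : k < m' + 2 := by omega
  have h1 := Aux14.recB m' (d : ℤ) k hkm
  have h0 := Aux14.recB m' (d : ℤ) (k - 1) (by omega)
  have hdiff : Aux14.B (m' + 2) (d : ℤ) k - Aux14.B (m' + 2) (d : ℤ) (k - 1)
      = Aux14.B (m' + 1) ((d : ℤ) - 1) (k - 1) - Aux14.B (m' + 1) (d : ℤ) (k - 1) := by
    rw [h1, h0, ← Finset.sum_sub_distrib]
    have hcong : ∀ j ∈ Finset.range (m' + 1),
        ((if j < k then Aux14.B (m' + 1) ((d:ℤ) - 1) j else Aux14.B (m' + 1) (d:ℤ) j)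
          - (if j < k - 1 then Aux14.B (m' + 1) ((d:ℤ) - 1) j else Aux14.B (m' + 1) (d:ℤ) j))
        = if j = k - 1 then
            (Aux14.B (m' + 1) ((d:ℤ) - 1) j - Aux14.B (m' + 1) (d:ℤ) j) else 0 := by
      intro j _
      by_cases hj : j = k - 1
      · subst hj
        rw [if_pos (by omega), if_neg (by omega), if_pos rfl]
      · rw [if_neg hj]
        by_cases hj2 : j < k - 1
        · rw [if_pos (by omega), if_pos hj2]
          ring
        · rw [if_neg (by omega), if_neg hj2]
          ring
    rw [Finset.sum_congr rfl hcong, Finset.sum_ite_eq' (Finset.range (m' + 1)) (k - 1)]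
    rw [if_pos (Finset.mem_range.mpr (by omega))]
  have hpos := (Aux14.good (m' + 1)).1 d (k - 1) hd1 (by omega) (by omega)
  rw [Aux14.Dl] at hpos
  have hBlt : Aux14.B (m' + 2) (d : ℤ) k < Aux14.B (m' + 2) (d : ℤ) (k - 1) := by linarith
  have e1 : Aux14.B (m' + 2) (d : ℤ) k = (A (m' + 2) (d : ℤ) (k + 1) : ℤ) := rfl
  have e2 : Aux14.B (m' + 2) (d : ℤ) (k - 1) = (A (m' + 2) (d : ℤ) k : ℤ) := by
    rw [Aux14.B, show k - 1 + 1 = k from by omega]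
  rw [e1, e2] at hBlt
  exact_mod_cast hBlt
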